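/- End-to-end selection theorem: Let Ĉ be a nonempty finite set, p : Ĉ → [p̄, 1) with p̄ ∈ (0,1), λ : Ĉ → [λ̄, 1] with λ̄ ∈ [0,1], and suppose p(c₁) ≥ p(c₂) implies λ(c₁) ≥ λ(c₂) for all c₁, c₂ ∈ Ĉ. Let P₀, P₁ be distributions on a finite set with P_{λ̄} strictly positive, and define U(c) = D_KL(P_{λ(c)} ‖ P_{λ̄}). Then any maximizer of D_KL(Bern(p(·)) ‖ Bern(p̄)) over Ĉ is also a maximizer of U over Ĉ. -/

import Mathlib

/-- Bernoulli KL divergence `D_KL(Bern(q) ‖ Bern(p))`. -/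
noncomputable def bernKL (q p : ℝ) : ℝ :=
  q * Real.log (q / p) + (1 - q) * Real.log ((1 - q) / (1 - p))

open Real Finset

/-- Derivative of the "expanded" Bernoulli KL. -/
lemma bernAux_hasDerivAt (pbar x : ℝ) (hx0 : 0 < x) (hx1 : x < 1) :
    HasDerivAt (fun q => q * Real.log q - q * Real.log pbar
        + ((1 - q) * Real.log (1 - q) - (1 - q) * Real.log (1 - pbar)))
      (Real.log x - Real.log pbar + (Real.log (1 - pbar) - Real.log (1 - x))) x := by
  have h1 : HasDerivAt (fun q : ℝ => q * Real.log q) (Real.log x + 1) x :=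
    Real.hasDerivAt_mul_log hx0.ne'
  have h2 : HasDerivAt (fun q : ℝ => q * Real.log pbar) (Real.log pbar) x := by
    simpa using (hasDerivAt_id x).mul_const (Real.log pbar)
  have haff : HasDerivAt (fun q : ℝ => 1 - q) (-1 : ℝ) x := by
    simpa using (hasDerivAt_id x).const_sub (1:ℝ)
  have h3 : HasDerivAt (fun q : ℝ => (1 - q) * Real.log (1 - q))
      ((Real.log (1 - x) + 1) * (-1)) x :=
    (Real.hasDerivAt_mul_log (by linarith : (1:ℝ) - x ≠ 0)).comp x haff
  have h4 : HasDerivAt (fun q : ℝ => (1 - q) * Real.log (1 - pbar))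
      (-Real.log (1 - pbar)) x := by
    simpa using haff.mul_const (Real.log (1 - pbar))
  have := (h1.sub h2).add (h3.sub h4)
  refine HasDerivAt.congr_deriv this ?_
  ring

lemma bernKL_lt {pbar q1 q2 : ℝ} (h0 : 0 < pbar) (h1 : pbar < 1)
    (hq1 : q1 ∈ Set.Ico pbar 1) (hq2 : q2 ∈ Set.Ico pbar 1) (h : q1 < q2) :
    bernKL q1 pbar < bernKL q2 pbar := by
  set g : ℝ → ℝ := fun q => q * Real.log q - q * Real.log pbar
      + ((1 - q) * Real.log (1 - q) - (1 - q) * Real.log (1 - pbar)) with hg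
  have heq : ∀ q ∈ Set.Ico pbar (1:ℝ), bernKL q pbar = g q := by
    intro q hq
    have hq0 : 0 < q := lt_of_lt_of_le h0 hq.1
    have hq1' : 0 < 1 - q := by linarith [hq.2]
    simp only [bernKL, hg]
    rw [Real.log_div hq0.ne' h0.ne',
      Real.log_div hq1'.ne' (by linarith : (1:ℝ) - pbar ≠ 0)]
    ring
  have hmono : StrictMonoOn g (Set.Ico pbar 1) := by
    apply strictMonoOn_of_deriv_pos (convex_Ico pbar 1)
    · intro x hx
      have hx0 : 0 < x := lt_of_lt_of_le h0 hx.1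
      have hx1 : x < 1 := hx.2
      exact ((bernAux_hasDerivAt pbar x hx0 hx1).continuousAt).continuousWithinAt
    · intro x hx
      rw [interior_Ico] at hx
      obtain ⟨hxa, hxb⟩ := hx
      have hx0 : 0 < x := lt_trans h0 hxa
      rw [(bernAux_hasDerivAt pbar x hx0 hxb).deriv]
      have l1 : Real.log pbar < Real.log x := Real.log_lt_log h0 hxa
      have l2 : Real.log (1 - x) < Real.log (1 - pbar) :=
        Real.log_lt_log (by linarith) (by linarith)
      linarith
  rw [heq q1 hq1, heq q2 hq2]
  exact hmono hq1 hq2 h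

/-- `x * log (x / c)` agrees with `x * log x - x * log c` on `[0, ∞)` for `c > 0`. -/
lemma xlogdiv_eq {x c : ℝ} (hx : 0 ≤ x) (hc : 0 < c) :
    x * Real.log (x / c) = x * Real.log x - x * Real.log c := by
  rcases eq_or_lt_of_le hx with h | h
  · simp [← h]
  · rw [Real.log_div h.ne' hc.ne']; ring

lemma convex_g (c : ℝ) :
    ConvexOn ℝ (Set.Ici (0:ℝ)) (fun x => x * Real.log x - x * Real.log c) := by
  refine ⟨convex_Ici 0, ?_⟩
  intro x hx y hy a b ha hb hab
  have h := Real.convexOn_mul_log.2 hx hy ha hb hab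
  simp only [smul_eq_mul] at *
  nlinarith [h]

/-- Gibbs' inequality (finite, with positive reference distribution). -/
lemma gibbs {Y : Type*} [Fintype Y] (w v : Y → ℝ) (hw : ∀ y, 0 ≤ w y)
    (hv : ∀ y, 0 < v y) (hs : ∑ y, w y = ∑ y, v y) :
    0 ≤ ∑ y, w y * Real.log (w y / v y) := by
  have key : ∀ y, w y - v y ≤ w y * Real.log (w y / v y) := by
    intro y
    rcases eq_or_lt_of_le (hw y) with h | h
    · simp [← h]; linarith [hv y]
    · have hvw : 0 < v y / w y := div_pos (hv y) h
      have := Real.log_le_sub_one_of_pos hvw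
      have hlog : Real.log (w y / v y) = -Real.log (v y / w y) := by
        rw [← Real.log_inv]; congr 1; field_simp
      rw [hlog]
      have h2 : w y * Real.log (v y / w y) ≤ w y * (v y / w y - 1) :=
        mul_le_mul_of_nonneg_left this (le_of_lt h)
      have h3 : w y * (v y / w y - 1) = v y - w y := by field_simp
      nlinarith
  calc (0:ℝ) = ∑ y, (w y - v y) := by rw [Finset.sum_sub_distrib, hs]; ring
    _ ≤ _ := Finset.sum_le_sum (fun y _ => key y)

lemma Fmono {Y : Type*} [Fintype Y] (P0 P1 : Y → ℝ)
    (hP00 : ∀ y, 0 ≤ P0 y) (hP01 : ∑ y, P0 y = 1)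
    (hP10 : ∀ y, 0 ≤ P1 y) (hP11 : ∑ y, P1 y = 1)
    (lbar a b : ℝ) (h0 : 0 ≤ lbar) (hla : lbar ≤ a) (hab : a ≤ b) (hb1 : b ≤ 1)
    (hpos : ∀ y, 0 < (1 - lbar) * P0 y + lbar * P1 y) :
    ∑ y, ((1 - a) * P0 y + a * P1 y) *
        Real.log (((1 - a) * P0 y + a * P1 y) / ((1 - lbar) * P0 y + lbar * P1 y))
      ≤ ∑ y, ((1 - b) * P0 y + b * P1 y) *
        Real.log (((1 - b) * P0 y + b * P1 y) / ((1 - lbar) * P0 y + lbar * P1 y)) := by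
  rcases eq_or_lt_of_le hab with rfl | hab'
  · exact le_rfl
  set m : ℝ → Y → ℝ := fun l y => (1 - l) * P0 y + l * P1 y with hm
  have hmnn : ∀ l, 0 ≤ l → l ≤ 1 → ∀ y, 0 ≤ m l y := fun l hl0 hl1 y =>
    add_nonneg (mul_nonneg (by linarith) (hP00 y)) (mul_nonneg hl0 (hP10 y))
  have hmsum : ∀ l, ∑ y, m l y = 1 := by
    intro l
    simp only [hm, Finset.sum_add_distrib, ← Finset.mul_sum, hP01, hP11]
    ring
  have hlb : lbar < b := lt_of_le_of_lt hla hab'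
  set t : ℝ := (b - a) / (b - lbar) with ht
  set s : ℝ := (a - lbar) / (b - lbar) with hs
  have hbl : 0 < b - lbar := by linarith
  have ht0 : 0 ≤ t := div_nonneg (by linarith) hbl.le
  have hs0 : 0 ≤ s := div_nonneg (by linarith) hbl.le
  have hts : t + s = 1 := by rw [ht, hs]; field_simp; ring
  have hcomb : ∀ y, m a y = t * m lbar y + s * m b y := by
    intro y
    have hta : t * lbar + s * b = a := by rw [ht, hs]; field_simp; ring
    simp only [hm]
    linear_combination (-P0 y) * hts + (P0 y - P1 y) * hta
  set F : ℝ → ℝ := fun l => ∑ y, m l y * Real.log (m l y / m lbar y) with hF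
  have hFlbar : F lbar = 0 := by
    simp only [hF]
    apply Finset.sum_eq_zero
    intro y _
    rw [div_self (hpos y).ne']
    simp
  have hFb : 0 ≤ F b :=
    gibbs (m b) (m lbar) (hmnn b (by linarith) hb1) hpos (by rw [hmsum, hmsum])
  have key : F a ≤ t * F lbar + s * F b := by
    simp only [hF, Finset.mul_sum, ← Finset.sum_add_distrib]
    apply Finset.sum_le_sum
    intro y _
    have hc : 0 < m lbar y := hpos y
    have hma : 0 ≤ m a y := hmnn a (by linarith) (by linarith) y
    have hmlb : 0 ≤ m lbar y := hmnn lbar h0 (by linarith) y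
    have hmb : 0 ≤ m b y := hmnn b (by linarith) hb1 y
    rw [xlogdiv_eq hma hc, xlogdiv_eq hmlb hc, xlogdiv_eq hmb hc, hcomb y]
    have := (convex_g (m lbar y)).2 (Set.mem_Ici.2 hmlb) (Set.mem_Ici.2 hmb) ht0 hs0 hts
    simpa using this
  have hs1 : s ≤ 1 := by
    rw [hs, div_le_one hbl]; linarith
  have : F a ≤ F b := by
    calc F a ≤ t * F lbar + s * F b := key
      _ = s * F b := by rw [hFlbar]; ring
      _ ≤ 1 * F b := mul_le_mul_of_nonneg_right hs1 hFb
      _ = F b := one_mul _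
  exact this

/-- End-to-end selection theorem: under the monotone linkage between helpfulness
probabilities `p : Ĉ → [p̄,1)` and mixture weights `λ : Ĉ → [λ̄,1]`, any maximizer of the
latent information gain `D_KL(Bern(p ·) ‖ Bern(p̄))` over `Ĉ` is also a maximizer of the
answer-space utility `U(c) = D_KL(P_{λ(c)} ‖ P_{λ̄})` over `Ĉ`. -/
theorem end_to_end_selection {C Y : Type*} [Fintype C] [Fintype Y]
    (Chat : Finset C) (hne : Chat.Nonempty)
    (p : C → ℝ) (pbar : ℝ) (hpbar : pbar ∈ Set.Ioo (0:ℝ) 1)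
    (hp : ∀ c ∈ Chat, p c ∈ Set.Ico pbar 1)
    (lam : C → ℝ) (lbar : ℝ) (hlbar : lbar ∈ Set.Icc (0:ℝ) 1)
    (hlam : ∀ c ∈ Chat, lam c ∈ Set.Icc lbar 1)
    (hmono : ∀ c₁ ∈ Chat, ∀ c₂ ∈ Chat, p c₁ ≥ p c₂ → lam c₁ ≥ lam c₂)
    (P0 P1 : Y → ℝ)
    (hP00 : ∀ y, 0 ≤ P0 y) (hP01 : ∑ y, P0 y = 1)
    (hP10 : ∀ y, 0 ≤ P1 y) (hP11 : ∑ y, P1 y = 1)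
    (hpos : ∀ y, 0 < (1 - lbar) * P0 y + lbar * P1 y)
    (cstar : C) (hcstar : cstar ∈ Chat)
    (hmax : ∀ c ∈ Chat, bernKL (p c) pbar ≤ bernKL (p cstar) pbar) :
    ∀ c ∈ Chat,
      ∑ y, ((1 - lam c) * P0 y + lam c * P1 y) *
          Real.log (((1 - lam c) * P0 y + lam c * P1 y) /
            ((1 - lbar) * P0 y + lbar * P1 y))
        ≤ ∑ y, ((1 - lam cstar) * P0 y + lam cstar * P1 y) *
          Real.log (((1 - lam cstar) * P0 y + lam cstar * P1 y) /
            ((1 - lbar) * P0 y + lbar * P1 y)) := by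
  intro c hc
  have hple : p c ≤ p cstar := by
    by_contra h
    push_neg at h
    exact absurd (hmax c hc)
      (not_le.2 (bernKL_lt hpbar.1 hpbar.2 (hp cstar hcstar) (hp c hc) h))
  have hlamle : lam c ≤ lam cstar := hmono cstar hcstar c hc hple
  exact Fmono P0 P1 hP00 hP01 hP10 hP11 lbar (lam c) (lam cstar)
    hlbar.1 (hlam c hc).1 hlamle (hlam cstar hcstar).2 hpos
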